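/- arXiv:1512.03552 — 2 statements merged into one kernel-verified Lean document; each statement's English description precedes it below -/
import Mathlib

section
/- Let A, B, λ be real numbers with 0 < B < 1 < A, and define G(q) = 16 A q³ + 4q²(λA² − 4A − B) + 4q(−λA² + A + B) + λA². Then G has at most one root q in the interval [0, 1/2). -/
/-- For `0 < B < 1 < A` and the cubic
`G(q) = 16Aq³ + 4q²(λA² − 4A − B) + 4q(−λA² + A + B) + λA²`,
`G` has at most one root in the interval `[0, 1/2)`. -/
theorem cubic_at_most_one_root (A B lam : ℝ) (hB0 : 0 < B) (hB1 : B < 1) (hA : 1 < A)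
    (G : ℝ → ℝ)
    (hG : ∀ q, G q = 16 * A * q ^ 3 + 4 * q ^ 2 * (lam * A ^ 2 - 4 * A - B)
      + 4 * q * (-(lam * A ^ 2) + A + B) + lam * A ^ 2) :
    ∀ q₁ ∈ Set.Ico (0 : ℝ) (1 / 2), ∀ q₂ ∈ Set.Ico (0 : ℝ) (1 / 2),
      G q₁ = 0 → G q₂ = 0 → q₁ = q₂ := by
  intro q₁ hq₁ q₂ hq₂ h1 h2
  rw [hG] at h1 h2
  have ht1 : q₁ - 1/2 < 0 := by linarith [hq₁.2]
  have ht2 : q₂ - 1/2 < 0 := by linarith [hq₂.2]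
  have key : (q₁ - q₂) * (16*A*(q₁-1/2)^2*(q₂-1/2)^2 - B*((q₁-1/2)+(q₂-1/2))) = 0 := by
    linear_combination (q₂-1/2)^2 * h1 - (q₁-1/2)^2 * h2
  have hpos : 16*A*(q₁-1/2)^2*(q₂-1/2)^2 - B*((q₁-1/2)+(q₂-1/2)) > 0 := by
    have h1' : (q₁-1/2)^2 > 0 := by nlinarith
    have h2' : (q₂-1/2)^2 > 0 := by nlinarith
    nlinarith [mul_pos h1' h2']
  have := mul_eq_zero.mp key
  rcases this with h | h
  · linarith
  · linarith
end

section
/- The function (q_1,…,q_d) ↦ B/A, where A = 1 + 2 Σ_{i=1}^d q_i²/(1−2q_i) and B = 1 − 2 Σ_{i=1}^d q_i², defined on the open simplex {q_i > 0, Σ q_i = 1/2, q_i < 1/2}, attains its maximum value 1 − 1/d at the point q_i = 1/(2d) for all i. -/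
/-- The drift function `(q₁,…,q_d) ↦ B/A`, with `A = 1 + 2∑ qᵢ²/(1−2qᵢ)` and
`B = 1 − 2∑ qᵢ²`, defined on the open simplex `{qᵢ ∈ (0,1/2), ∑ qᵢ = 1/2}`,
attains its maximum value `1 − 1/d` at `qᵢ = 1/(2d)`. -/
theorem drift_max_at_uniform (d : ℕ) (hd : 2 ≤ d) :
    (∀ q : Fin d → ℝ, (∀ i, 0 < q i ∧ q i < 1 / 2) → (∑ i, q i) = 1 / 2 →
      (1 - 2 * ∑ i, q i ^ 2) / (1 + 2 * ∑ i, q i ^ 2 / (1 - 2 * q i)) ≤ 1 - 1 / d) ∧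
    (1 - 2 * ∑ _i : Fin d, (1 / (2 * d) : ℝ) ^ 2) /
        (1 + 2 * ∑ _i : Fin d, (1 / (2 * d) : ℝ) ^ 2 / (1 - 2 * (1 / (2 * d) : ℝ)))
      = 1 - 1 / d := by
  have hd0 : (0:ℝ) < d := by
    have : (2:ℝ) ≤ d := by exact_mod_cast hd
    linarith
  have hd1 : (1:ℝ) < d := by
    have : (2:ℝ) ≤ d := by exact_mod_cast hd
    linarith
  constructor
  · intro q hq hsum
    have hpos : ∀ i, 0 < 1 - 2 * q i := fun i => by linarith [(hq i).2]
    have hs : (1:ℝ)/(4*d) ≤ ∑ i, q i ^ 2 := by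
      have h := sq_sum_le_card_mul_sum_sq (s := Finset.univ) (f := q)
      rw [hsum] at h
      simp only [Finset.card_univ, Fintype.card_fin] at h
      rw [div_le_iff₀ (by positivity)]
      nlinarith
    have hT : (1:ℝ)/(4*(d-1)) ≤ ∑ i, q i ^ 2 / (1 - 2 * q i) := by
      have h := Finset.sq_sum_div_le_sum_sq_div Finset.univ q (fun i _ => hpos i)
      rw [hsum] at h
      have hg : ∑ i : Fin d, (1 - 2 * q i) = d - 1 := by
        rw [Finset.sum_sub_distrib, ← Finset.mul_sum, hsum]
        simp
      rw [hg] at h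
      have hdm1 : (0:ℝ) < d - 1 := by linarith
      have heq : ((1:ℝ)/2)^2 / ((d:ℝ)-1) = 1/(4*((d:ℝ)-1)) := by
        rw [div_eq_div_iff hdm1.ne' (by positivity)]
        ring
      linarith [h, heq ▸ h]
    have hA : 0 < 1 + 2 * ∑ i, q i ^ 2 / (1 - 2 * q i) := by
      have : 0 ≤ ∑ i, q i ^ 2 / (1 - 2 * q i) :=
        Finset.sum_nonneg fun i _ => div_nonneg (sq_nonneg _) (hpos i).le
      linarith
    rw [div_le_iff₀ hA]
    have h1 : (1:ℝ) - 1/d ≥ 0 := by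
      rw [ge_iff_le, sub_nonneg, div_le_one hd0]; linarith
    have key : (1 - 1/(d:ℝ)) * (1 + 2 * (1/(4*(d-1)))) ≤
        (1 - 1/(d:ℝ)) * (1 + 2 * ∑ i, q i ^ 2 / (1 - 2 * q i)) := by
      apply mul_le_mul_of_nonneg_left (by linarith) h1
    have hcalc : (1:ℝ) - 2 * (1/(4*d)) = (1 - 1/(d:ℝ)) * (1 + 2 * (1/(4*(d-1)))) := by
      have hdm1 : (0:ℝ) < d - 1 := by linarith
      field_simp
      ring
    linarith
  · have h1 : (1:ℝ) - 2 * (1/(2*(d:ℝ))) = ((d:ℝ)-1)/d := by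
      field_simp
    rw [Finset.sum_const, Finset.sum_const]
    simp only [Finset.card_univ, Fintype.card_fin, nsmul_eq_mul]
    rw [h1]
    have hdm1 : (0:ℝ) < (d:ℝ) - 1 := by linarith
    field_simp
    ring
end
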